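/- Let G be a cubic graph, D an orientation of G with a circular nowhere-zero r-flow, and let V₁, V₂ be the sets of vertices of out-degree 1 and 2 respectively in D. Then for every set X of vertices, |E(X)| ≥ (r/(r-2)) · | |V₁ ∩ X| − |V₂ ∩ X| |, where E(X) is the set of edges with exactly one endpoint in X. -/

import Mathlib

open SimpleGraph

/-- A cubic graph: every vertex has degree 3. -/
def IsCubic {V : Type*} [Fintype V] (G : SimpleGraph V) : Prop :=
  ∀ v : V, Nat.card (G.neighborSet v) = 3

/-- A circular nowhere-zero `r`-flow: an orientation `dir` of `G` together with
a flow value `f` on each directed edge, with values in `[1, r-1]` and flow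
conservation at every vertex. -/
structure CNZF {V : Type*} [Fintype V] (G : SimpleGraph V) (r : ℝ) where
  dir : V → V → Bool
  f : V → V → ℝ
  orients : ∀ u v, G.Adj u v ↔ (dir u v = true ∨ dir v u = true)
  asymm : ∀ u v, dir u v = true → dir v u = false
  lb : ∀ u v, dir u v = true → 1 ≤ f u v
  ub : ∀ u v, dir u v = true → f u v ≤ r - 1
  conserv : ∀ v : V, (∑ u : V, if dir v u = true then f v u else 0)
      = ∑ u : V, if dir u v = true then f u v else 0

/-- Out-degree of a vertex in an orientation. -/
noncomputable def outDeg {V : Type*} (dir : V → V → Bool) (v : V) : ℕ :=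
  Nat.card {u | dir v u = true}

/-- Every connected component of the subgraph induced by `S` is a tree
on at most `m` vertices. -/
def MonoOK {V : Type*} (G : SimpleGraph V) (m : ℕ) (S : Set V) : Prop :=
  (G.induce S).IsAcyclic ∧
    ∀ c : (G.induce S).ConnectedComponent, Nat.card c.supp ≤ m

/-- A `k`-weak bisection, given by its first part `S`. -/
def IsWeakBisection {V : Type*} [Fintype V] (G : SimpleGraph V) (k : ℕ) (S : Set V) : Prop :=
  Nat.card S = Nat.card (Sᶜ : Set V) ∧ MonoOK G (k-2) S ∧ MonoOK G (k-2) (Sᶜ : Set V)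

/-- Every monochromatic component of the 2-coloring `c` has at most `m` vertices. -/
def MonoAtMost {V : Type*} (G : SimpleGraph V) (c : V → Bool) (m : ℕ) : Prop :=
  ∀ b : Bool, ∀ comp : (G.induce {v | c v = b}).ConnectedComponent,
    Nat.card comp.supp ≤ m

/-- Edges of `L_k` (on vertex labels `0, …, 5+2k`): `L_0` is `K_{3,3}` minus an
edge (parts `{0,1,4}` and `{2,3,5}`, edge `45` removed, degree-2 vertices `4,5`);
at step `j` the two new adjacent vertices `4+2j, 5+2j` are attached to the
previous degree-2 vertices `2+2j, 3+2j`. The degree-2 vertices of `L_k` are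
`4+2k` and `5+2k`. -/
def LEdge (k : ℕ) (a b : ℕ) : Prop :=
  (a, b) ∈ ({(0,2),(0,3),(0,5),(1,2),(1,3),(1,5),(4,2),(4,3)} : Set (ℕ × ℕ)) ∨
  ∃ j, 1 ≤ j ∧ j ≤ k ∧
    ((a, b) = (4+2*j, 5+2*j) ∨ (a, b) = (2+2*j, 4+2*j) ∨ (a, b) = (3+2*j, 5+2*j))

/-- The graph `L_k`. -/
def Lgraph (k : ℕ) : SimpleGraph (Fin (6+2*k)) :=
  SimpleGraph.fromRel (fun a b => LEdge k a.val b.val)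

/-- Edges of `T_k`: one copy of `L'_k` (the copy of `L_k` on `0..5+2k` with apex
`6+2k`), two copies of `L'_0` (on `7+2k..12+2k` with apex `13+2k`, and on
`14+2k..19+2k` with apex `20+2k`), and a central vertex `21+2k` adjacent to the
three apexes. -/
def TEdge (k : ℕ) (a b : ℕ) : Prop :=
  LEdge k a b
  ∨ (a = 6+2*k ∧ (b = 4+2*k ∨ b = 5+2*k))
  ∨ (∃ a' b', LEdge 0 a' b' ∧ a = 7+2*k+a' ∧ b = 7+2*k+b')
  ∨ (a = 13+2*k ∧ (b = 11+2*k ∨ b = 12+2*k))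
  ∨ (∃ a' b', LEdge 0 a' b' ∧ a = 14+2*k+a' ∧ b = 14+2*k+b')
  ∨ (a = 20+2*k ∧ (b = 18+2*k ∨ b = 19+2*k))
  ∨ (a = 21+2*k ∧ (b = 6+2*k ∨ b = 13+2*k ∨ b = 20+2*k))

/-- The cubic graph `T_k`. -/
def Tgraph (k : ℕ) : SimpleGraph (Fin (22+2*k)) :=
  SimpleGraph.fromRel (fun a b => TEdge k a.val b.val)

/-- A valid factor of `G`: a spanning subgraph all of whose components are paths
or cycles (equivalently, all degrees are 1 or 2), such that the two endpoints
(degree-1 vertices) of every odd component are non-adjacent in `G`; in particular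
no component is an isolated vertex. -/
def IsValidFactor {V : Type*} (G H : SimpleGraph V) : Prop :=
  H ≤ G ∧
  (∀ v : V, 1 ≤ Nat.card (H.neighborSet v) ∧ Nat.card (H.neighborSet v) ≤ 2) ∧
  ∀ c : H.ConnectedComponent, Odd (Nat.card c.supp) →
    ∀ u v : V, u ∈ c.supp → v ∈ c.supp → u ≠ v →
      Nat.card (H.neighborSet u) = 1 → Nat.card (H.neighborSet v) = 1 → ¬ G.Adj u v

/-- A component of `H` is a cycle iff all its vertices have degree 2 in `H`. -/
def IsCycleComp {V : Type*} (H : SimpleGraph V) (c : H.ConnectedComponent) : Prop :=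
  ∀ v ∈ c.supp, Nat.card (H.neighborSet v) = 2

/-- An odd cycle component. -/
def OddCycleComp {V : Type*} (H : SimpleGraph V) (c : H.ConnectedComponent) : Prop :=
  Odd (Nat.card c.supp) ∧ IsCycleComp H c

/-- An odd path component (a component with an odd number of vertices containing
a degree-1 vertex). -/
def OddPathComp {V : Type*} (H : SimpleGraph V) (c : H.ConnectedComponent) : Prop :=
  Odd (Nat.card c.supp) ∧ ∃ v ∈ c.supp, Nat.card (H.neighborSet v) = 1

noncomputable def numComponents {V : Type*} (H : SimpleGraph V) : ℕ := Nat.card H.ConnectedComponent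

noncomputable def numOddCycles {V : Type*} (H : SimpleGraph V) : ℕ :=
  Nat.card {c : H.ConnectedComponent // OddCycleComp H c}

/-- `H` is a valid factor of `G` with the minimum number of components. -/
def MinimizesComponents {V : Type*} (G H : SimpleGraph V) : Prop :=
  IsValidFactor G H ∧ ∀ H' : SimpleGraph V, IsValidFactor G H' →
    numComponents H ≤ numComponents H'

/-- `H` is a valid factor of `G` minimizing the number of components and,
subject to that, the number of odd cycles. -/
def IsMinValidFactor {V : Type*} (G H : SimpleGraph V) : Prop :=
  MinimizesComponents G H ∧
  ∀ H' : SimpleGraph V, IsValidFactor G H' →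
    numComponents H' = numComponents H → numOddCycles H ≤ numOddCycles H'

/-- An external vertex of a factor: an endpoint of a path component, or a vertex
of an odd cycle component. -/
def ExternalVtx {V : Type*} (H : SimpleGraph V) (v : V) : Prop :=
  Nat.card (H.neighborSet v) = 1 ∨ OddCycleComp H (H.connectedComponentMk v)

open Finset in
lemma natCard_filter {V : Type*} [Fintype V] (P : V → Prop) [DecidablePred P] :
    (Nat.card {u | P u}) = (Finset.univ.filter P).card := by
  rw [Nat.card_eq_fintype_card]
  simp [Fintype.card_subtype]

open Finset in
/-- For an orientation of a cubic graph with a circular nowhere-zero r-flow and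
the partition (V₁, V₂) by out-degree, every vertex set X satisfies
|E(X)| ≥ (r/(r-2)) · ||V₁ ∩ X| − |V₂ ∩ X||. -/
theorem stmt18 {V : Type*} [Fintype V] (G : SimpleGraph V) (r : ℝ) (hr : 2 < r)
    (hG : IsCubic G) (c : CNZF G r) (X : Set V) :
    (r / (r - 2)) *
        |((Nat.card {v | v ∈ X ∧ outDeg c.dir v = 1} : ℝ)
          - (Nat.card {v | v ∈ X ∧ outDeg c.dir v = 2} : ℝ))|
      ≤ (Nat.card {p : V × V | p.1 ∈ X ∧ p.2 ∉ X ∧ G.Adj p.1 p.2} : ℝ) := by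
  classical
  set d : V → V → Bool := c.dir with hd
  set od : V → ℕ := fun v => (univ.filter fun u => d v u = true).card with hod_def
  set idg : V → ℕ := fun v => (univ.filter fun u => d u v = true).card with hidg_def
  -- degree identity
  have hdeg : ∀ v, od v + idg v = 3 := by
    intro v
    have h3 := hG v
    rw [show (G.neighborSet v) = {u | G.Adj v u} from rfl, natCard_filter] at h3
    have hunion : (univ.filter fun u => G.Adj v u)
        = (univ.filter fun u => d v u = true) ∪ (univ.filter fun u => d u v = true) := by
      rw [← filter_or]
      apply filter_congr
      intro u _
      simp only [c.orients v u, hd]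
    have hdisj : Disjoint (univ.filter fun u => d v u = true)
        (univ.filter fun u => d u v = true) := by
      rw [Finset.disjoint_left]
      intro u h1 h2
      simp only [mem_filter, mem_univ, true_and] at h1 h2
      have := c.asymm v u h1
      rw [hd] at h2
      rw [this] at h2
      exact Bool.noConfusion h2
    rw [hunion, card_union_of_disjoint hdisj] at h3
    exact h3
  -- flow sums per vertex
  have hcons : ∀ v, (∑ u ∈ univ.filter (fun u => d v u = true), c.f v u)
      = ∑ u ∈ univ.filter (fun u => d u v = true), c.f u v := by
    intro v
    rw [sum_filter, sum_filter]
    exact c.conserv v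
  have houtlb : ∀ v, (od v : ℝ) ≤ ∑ u ∈ univ.filter (fun u => d v u = true), c.f v u := by
    intro v
    calc (od v : ℝ) = ∑ u ∈ univ.filter (fun u => d v u = true), (1:ℝ) := by
          simp [hod_def]
      _ ≤ _ := by
          apply sum_le_sum
          intro u hu
          simp only [mem_filter, mem_univ, true_and] at hu
          exact c.lb v u hu
  have hinlb : ∀ v, (idg v : ℝ) ≤ ∑ u ∈ univ.filter (fun u => d u v = true), c.f u v := by
    intro v
    calc (idg v : ℝ) = ∑ u ∈ univ.filter (fun u => d u v = true), (1:ℝ) := by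
          simp [hidg_def]
      _ ≤ _ := by
          apply sum_le_sum
          intro u hu
          simp only [mem_filter, mem_univ, true_and] at hu
          exact c.lb u v hu
  have hod12 : ∀ v, od v = 1 ∨ od v = 2 := by
    intro v
    by_contra h
    push_neg at h
    have h3 := hdeg v
    have : od v = 0 ∨ od v = 3 := by omega
    rcases this with h0 | h0
    · have hi3 : idg v = 3 := by omega
      have hempty : (univ.filter fun u => d v u = true) = ∅ := by
        rw [← card_eq_zero]; exact h0
      have := hinlb v
      rw [← hcons v, hempty] at this
      simp [hi3] at this
      linarith
    · have hi0 : idg v = 0 := by omega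
      have hempty : (univ.filter fun u => d u v = true) = ∅ := by
        rw [← card_eq_zero]; exact hi0
      have := houtlb v
      rw [hcons v, hempty] at this
      simp [h0] at this
      linarith
  -- cut finsets
  set Xf : Finset V := univ.filter (· ∈ X) with hXf_def
  set Xc : Finset V := univ.filter (fun u => ¬ u ∈ X) with hXc_def
  have split : ∀ (g : V → V → ℝ), ∑ v ∈ Xf, ∑ u ∈ univ, g v u
      = (∑ v ∈ Xf, ∑ u ∈ Xf, g v u) + ∑ v ∈ Xf, ∑ u ∈ Xc, g v u := by
    intro g
    rw [← sum_add_distrib]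
    refine sum_congr rfl fun v _ => ?_
    exact (sum_filter_add_sum_filter_not univ (· ∈ X) (g v)).symm
  set A : Finset (V × V) := (Xf ×ˢ Xc).filter (fun p => d p.1 p.2 = true) with hA_def
  set B : Finset (V × V) := (Xf ×ˢ Xc).filter (fun p => d p.2 p.1 = true) with hB_def
  -- flow across the cut
  have hcut : ∑ p ∈ A, c.f p.1 p.2 = ∑ p ∈ B, c.f p.2 p.1 := by
    have h0 : ∑ v ∈ Xf, ∑ u ∈ univ, (if d v u = true then c.f v u else 0)
        = ∑ v ∈ Xf, ∑ u ∈ univ, (if d u v = true then c.f u v else 0) :=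
      sum_congr rfl fun v _ => c.conserv v
    rw [split, split] at h0
    have hint : ∑ v ∈ Xf, ∑ u ∈ Xf, (if d v u = true then c.f v u else 0)
        = ∑ v ∈ Xf, ∑ u ∈ Xf, (if d u v = true then c.f u v else 0) := Finset.sum_comm
    have h1 : ∑ v ∈ Xf, ∑ u ∈ Xc, (if d v u = true then c.f v u else 0)
        = ∑ v ∈ Xf, ∑ u ∈ Xc, (if d u v = true then c.f u v else 0) := by linarith
    calc ∑ p ∈ A, c.f p.1 p.2
        = ∑ p ∈ Xf ×ˢ Xc, (if d p.1 p.2 = true then c.f p.1 p.2 else 0) := by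
          rw [hA_def, sum_filter]
      _ = ∑ v ∈ Xf, ∑ u ∈ Xc, (if d v u = true then c.f v u else 0) :=
          Finset.sum_product' Xf Xc fun v u => if d v u = true then c.f v u else 0
      _ = ∑ v ∈ Xf, ∑ u ∈ Xc, (if d u v = true then c.f u v else 0) := h1
      _ = ∑ p ∈ Xf ×ˢ Xc, (if d p.2 p.1 = true then c.f p.2 p.1 else 0) :=
          (Finset.sum_product' Xf Xc fun v u => if d u v = true then c.f u v else 0).symm
      _ = ∑ p ∈ B, c.f p.2 p.1 := by rw [hB_def, sum_filter]
  -- counting across the cut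
  have hcount : (A.card : ℝ) - B.card = ∑ v ∈ Xf, ((od v : ℝ) - idg v) := by
    have e1 : (A.card : ℝ) = ∑ v ∈ Xf, ∑ u ∈ Xc, (if d v u = true then (1:ℝ) else 0) := by
      rw [hA_def, ← Finset.sum_boole]
      exact Finset.sum_product' Xf Xc fun v u => if d v u = true then (1:ℝ) else 0
    have e2 : (B.card : ℝ) = ∑ v ∈ Xf, ∑ u ∈ Xc, (if d u v = true then (1:ℝ) else 0) := by
      rw [hB_def, ← Finset.sum_boole]
      exact Finset.sum_product' Xf Xc fun v u => if d u v = true then (1:ℝ) else 0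
    have e3 : ∑ v ∈ Xf, (od v : ℝ) = ∑ v ∈ Xf, ∑ u ∈ univ, (if d v u = true then (1:ℝ) else 0) :=
      sum_congr rfl fun v _ => by rw [hod_def]; exact (Finset.sum_boole _ _).symm
    have e4 : ∑ v ∈ Xf, (idg v : ℝ) = ∑ v ∈ Xf, ∑ u ∈ univ, (if d u v = true then (1:ℝ) else 0) :=
      sum_congr rfl fun v _ => by rw [hidg_def]; exact (Finset.sum_boole _ _).symm
    have hint : ∑ v ∈ Xf, ∑ u ∈ Xf, (if d v u = true then (1:ℝ) else 0)
        = ∑ v ∈ Xf, ∑ u ∈ Xf, (if d u v = true then (1:ℝ) else 0) := Finset.sum_comm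
    rw [sum_sub_distrib, e3, e4, split, split, e1, e2]
    linarith
  set n1 : ℕ := (Xf.filter fun v => od v = 1).card with hn1_def
  set n2 : ℕ := (Xf.filter fun v => od v = 2).card with hn2_def
  have hsum2 : ∑ v ∈ Xf, ((od v : ℝ) - idg v) = (n2 : ℝ) - n1 := by
    have hterm : ∀ v ∈ Xf, ((od v : ℝ) - (idg v : ℝ)) = (if od v = 1 then (-1:ℝ) else 1) := by
      intro v _
      rcases hod12 v with h | h
      · have h2 : idg v = 2 := by have := hdeg v; omega
        rw [h, h2, if_pos rfl]; norm_num
      · have h2 : idg v = 1 := by have := hdeg v; omega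
        rw [h, h2, if_neg (by omega)]; norm_num
    rw [sum_congr rfl hterm, sum_ite]
    have hf2 : Xf.filter (fun v => ¬ od v = 1) = Xf.filter (fun v => od v = 2) := by
      apply filter_congr
      intro v _
      rcases hod12 v with h | h <;> simp [h]
    rw [hf2]
    simp only [sum_const, nsmul_eq_mul, mul_one, mul_neg, ← hn1_def, ← hn2_def]
    ring
  -- bridges to Nat.card
  have houtdeg : ∀ v, outDeg d v = od v := fun v => natCard_filter _
  have hb1 : Nat.card {v | v ∈ X ∧ outDeg d v = 1} = n1 := by
    rw [natCard_filter, hn1_def, hXf_def, filter_filter]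
    congr 1
    ext v
    simp only [mem_filter, mem_univ, true_and, houtdeg]
  have hb2 : Nat.card {v | v ∈ X ∧ outDeg d v = 2} = n2 := by
    rw [natCard_filter, hn2_def, hXf_def, filter_filter]
    congr 1
    ext v
    simp only [mem_filter, mem_univ, true_and, houtdeg]
  have hABdisj : Disjoint A B := by
    rw [Finset.disjoint_left]
    intro p hp hq
    rw [hA_def, mem_filter] at hp
    rw [hB_def, mem_filter] at hq
    have hfalse := c.asymm p.1 p.2 hp.2
    have h2 := hq.2
    rw [hd, hfalse] at h2
    exact Bool.noConfusion h2
  have hE : Nat.card {p : V × V | p.1 ∈ X ∧ p.2 ∉ X ∧ G.Adj p.1 p.2} = A.card + B.card := by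
    rw [natCard_filter, ← card_union_of_disjoint hABdisj]
    congr 1
    ext p
    simp only [hA_def, hB_def, mem_union, mem_filter, mem_product, hXf_def, hXc_def,
      mem_univ, true_and, Set.mem_setOf_eq]
    constructor
    · rintro ⟨h1, h2, h3⟩
      rcases (c.orients p.1 p.2).mp h3 with h | h
      · exact Or.inl ⟨⟨h1, h2⟩, h⟩
      · exact Or.inr ⟨⟨h1, h2⟩, h⟩
    · rintro (⟨⟨h1, h2⟩, h⟩ | ⟨⟨h1, h2⟩, h⟩)
      · exact ⟨h1, h2, (c.orients p.1 p.2).mpr (Or.inl h)⟩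
      · exact ⟨h1, h2, (c.orients p.1 p.2).mpr (Or.inr h)⟩
  -- bounds on cut flows
  have haA : (A.card : ℝ) ≤ ∑ p ∈ A, c.f p.1 p.2 := by
    calc (A.card : ℝ) = ∑ p ∈ A, (1:ℝ) := by simp
      _ ≤ _ := sum_le_sum fun p hp =>
          c.lb p.1 p.2 (by rw [hA_def, mem_filter] at hp; exact hp.2)
  have haB : (B.card : ℝ) ≤ ∑ p ∈ B, c.f p.2 p.1 := by
    calc (B.card : ℝ) = ∑ p ∈ B, (1:ℝ) := by simp
      _ ≤ _ := sum_le_sum fun p hp =>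
          c.lb p.2 p.1 (by rw [hB_def, mem_filter] at hp; exact hp.2)
  have hubA : ∑ p ∈ A, c.f p.1 p.2 ≤ (A.card : ℝ) * (r - 1) := by
    calc ∑ p ∈ A, c.f p.1 p.2 ≤ ∑ p ∈ A, (r-1) := sum_le_sum fun p hp =>
          c.ub p.1 p.2 (by rw [hA_def, mem_filter] at hp; exact hp.2)
      _ = (A.card : ℝ) * (r-1) := by rw [sum_const, nsmul_eq_mul]
  have hubB : ∑ p ∈ B, c.f p.2 p.1 ≤ (B.card : ℝ) * (r - 1) := by
    calc ∑ p ∈ B, c.f p.2 p.1 ≤ ∑ p ∈ B, (r-1) := sum_le_sum fun p hp =>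
          c.ub p.2 p.1 (by rw [hB_def, mem_filter] at hp; exact hp.2)
      _ = (B.card : ℝ) * (r-1) := by rw [sum_const, nsmul_eq_mul]
  have hkey1 : (A.card : ℝ) ≤ (r - 1) * B.card := by
    calc (A.card : ℝ) ≤ ∑ p ∈ A, c.f p.1 p.2 := haA
      _ = ∑ p ∈ B, c.f p.2 p.1 := hcut
      _ ≤ (B.card : ℝ) * (r-1) := hubB
      _ = (r-1) * B.card := mul_comm _ _
  have hkey2 : (B.card : ℝ) ≤ (r - 1) * A.card := by
    calc (B.card : ℝ) ≤ ∑ p ∈ B, c.f p.2 p.1 := haB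
      _ = ∑ p ∈ A, c.f p.1 p.2 := hcut.symm
      _ ≤ (A.card : ℝ) * (r-1) := hubA
      _ = (r-1) * A.card := mul_comm _ _
  have hdiff : (A.card : ℝ) - B.card = (n2 : ℝ) - n1 := by rw [hcount, hsum2]
  have hr2 : (0:ℝ) < r - 2 := by linarith
  have ha0 : (0:ℝ) ≤ (A.card : ℝ) := Nat.cast_nonneg _
  have hb0 : (0:ℝ) ≤ (B.card : ℝ) := Nat.cast_nonneg _
  rw [hb1, hb2, hE]
  rw [div_mul_eq_mul_div, div_le_iff₀ hr2]
  push_cast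
  rcases le_total ((n1 : ℝ)) ((n2 : ℝ)) with h | h
  · rw [abs_of_nonpos (by linarith)]
    nlinarith [hkey1, hdiff]
  · rw [abs_of_nonneg (by linarith)]
    nlinarith [hkey2, hdiff]
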